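/- arXiv:2305.10465 — 8 statements merged into one kernel-verified Lean document; each statement's English description precedes it below -/
import Mathlib

section
/- Let A be a real 3×3 matrix with proper singular value decomposition A = U · diag(s₁, s₂, s₃) · Vᵀ, where U, V ∈ SO(3) and s₁ ≥ s₂ ≥ |s₃|. Then for every R ∈ SO(3), tr(Aᵀ R) ≤ s₁ + s₂ + s₃; equivalently, tr(S − Aᵀ R) ≥ 0 where S = diag(s₁, s₂, s₃). In particular the square root appearing in the rotation Laplace density exp(−√(tr(S − AᵀR)))/√(tr(S − AᵀR)) is well defined for all R ∈ SO(3). -/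
open Matrix

/-- `SO3 R` means `R` is a rotation matrix: `RᵀR = I` and `det R = 1`. -/
def SO3 (R : Matrix (Fin 3) (Fin 3) ℝ) : Prop :=
  Rᵀ * R = 1 ∧ R.det = 1

lemma cauchy3 (a1 a2 a3 b1 b2 b3 : ℝ) :
    (a1*b1 + a2*b2 + a3*b3)^2 ≤ (a1^2 + a2^2 + a3^2) * (b1^2 + b2^2 + b3^2) := by
  nlinarith [sq_nonneg (a1*b2 - a2*b1), sq_nonneg (a1*b3 - a3*b1), sq_nonneg (a2*b3 - a3*b2)]

lemma so3_facts (Q : Matrix (Fin 3) (Fin 3) ℝ) (hQ : SO3 Q) :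
    Q 0 0 ≤ 1 ∧ Q 2 2 ≤ 1 ∧ Q 0 0 + Q 1 1 ≤ 1 + Q 2 2 := by
  obtain ⟨horth, hdet⟩ := hQ
  have hQQt : Q * Qᵀ = 1 := mul_eq_one_comm.mp horth
  have hadj : Qᵀ = Matrix.adjugate Q := by
    calc Qᵀ = Qᵀ * (Q * Matrix.adjugate Q) := by
            rw [Matrix.mul_adjugate, hdet, one_smul, mul_one]
      _ = (Qᵀ * Q) * Matrix.adjugate Q := by rw [mul_assoc]
      _ = Matrix.adjugate Q := by rw [horth, one_mul]
  have h22 : Q 2 2 = Q 0 0 * Q 1 1 - Q 0 1 * Q 1 0 := by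
    have := congrFun (congrFun hadj 2) 2
    rw [Matrix.adjugate_fin_three] at this
    simpa [Matrix.transpose_apply] using this
  have c1 := congrFun (congrFun horth 0) 0
  have c2 := congrFun (congrFun horth 1) 1
  have c12 := congrFun (congrFun horth 0) 1
  have c3 := congrFun (congrFun horth 2) 2
  simp [Matrix.mul_apply, Fin.sum_univ_three, Matrix.one_apply,
    Matrix.transpose_apply] at c1 c2 c12 c3
  refine ⟨by nlinarith [sq_nonneg (Q 1 0), sq_nonneg (Q 2 0), sq_nonneg (Q 0 0 - 1)],
    by nlinarith [sq_nonneg (Q 0 2), sq_nonneg (Q 1 2), sq_nonneg (Q 2 2 - 1)], ?_⟩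
  -- a = (1 - Q00, -Q10, -Q20), b = (-Q01, 1 - Q11, -Q21)
  have ea : (1 - Q 0 0)^2 + (-Q 1 0)^2 + (-Q 2 0)^2 = 2 - 2 * Q 0 0 := by
    linear_combination c1
  have eb : (-Q 0 1)^2 + (1 - Q 1 1)^2 + (-Q 2 1)^2 = 2 - 2 * Q 1 1 := by
    linear_combination c2
  have eab : (1 - Q 0 0) * (-Q 0 1) + (-Q 1 0) * (1 - Q 1 1) + (-Q 2 0) * (-Q 2 1)
      = -(Q 0 1 + Q 1 0) := by linear_combination c12
  have hcs := cauchy3 (1 - Q 0 0) (-Q 1 0) (-Q 2 0) (-Q 0 1) (1 - Q 1 1) (-Q 2 1)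
  rw [ea, eb, eab] at hcs
  nlinarith [sq_nonneg (Q 0 1 - Q 1 0)]

/-- If `A = U · diag(s₁, s₂, s₃) · Vᵀ` is a proper SVD of `A`, then for every
rotation `R`, `tr(AᵀR) ≤ s₁ + s₂ + s₃`; equivalently `tr(S − AᵀR) ≥ 0`
where `S = diag(s₁, s₂, s₃)`. -/
theorem trace_le_sum_singular_values
    (A U V : Matrix (Fin 3) (Fin 3) ℝ) (s₁ s₂ s₃ : ℝ)
    (hU : SO3 U) (hV : SO3 V) (h12 : s₁ ≥ s₂) (h23 : s₂ ≥ |s₃|)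
    (hA : A = U * Matrix.diagonal ![s₁, s₂, s₃] * Vᵀ)
    (R : Matrix (Fin 3) (Fin 3) ℝ) (hR : SO3 R) :
    (Aᵀ * R).trace ≤ s₁ + s₂ + s₃ ∧
    (Matrix.diagonal ![s₁, s₂, s₃] - Aᵀ * R).trace ≥ 0 := by
  set S := Matrix.diagonal ![s₁, s₂, s₃] with hS
  set Q := Uᵀ * R * V with hQdef
  have hUU : U * Uᵀ = 1 := mul_eq_one_comm.mp hU.1
  have hQ : SO3 Q := by
    constructor
    · show (Uᵀ * R * V)ᵀ * (Uᵀ * R * V) = 1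
      rw [Matrix.transpose_mul, Matrix.transpose_mul, Matrix.transpose_transpose]
      calc Vᵀ * (Rᵀ * U) * (Uᵀ * R * V)
          = Vᵀ * (Rᵀ * (U * Uᵀ) * R) * V := by noncomm_ring
        _ = Vᵀ * (Rᵀ * R) * V := by rw [hUU, mul_one]
        _ = Vᵀ * V := by rw [hR.1, mul_one]
        _ = 1 := hV.1
    · show (Uᵀ * R * V).det = 1
      rw [Matrix.det_mul, Matrix.det_mul, Matrix.det_transpose, hU.2, hV.2, hR.2]
      ring
  have htr : (Aᵀ * R).trace = s₁ * Q 0 0 + s₂ * Q 1 1 + s₃ * Q 2 2 := by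
    have hAt : Aᵀ * R = V * (S * (Uᵀ * R)) := by
      rw [hA, Matrix.transpose_mul, Matrix.transpose_mul, Matrix.transpose_transpose]
      have hSt : Sᵀ = S := Matrix.diagonal_transpose _
      rw [hSt]; noncomm_ring
    rw [hAt, Matrix.trace_mul_comm, mul_assoc, ← hQdef]
    show (S * Q).trace = _
    simp [Matrix.trace, Matrix.diag, Matrix.mul_apply, Fin.sum_univ_three, hS,
      Matrix.diagonal_apply]
  have habs := abs_le.mp (le_refl |s₃|)
  have h3 : -s₃ ≤ |s₃| := neg_le_abs s₃
  have h3' : s₃ ≤ |s₃| := le_abs_self s₃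
  obtain ⟨f1, f3, f2⟩ := so3_facts Q hQ
  have key : (Aᵀ * R).trace ≤ s₁ + s₂ + s₃ := by
    rw [htr]; nlinarith [mul_nonneg (sub_nonneg.mpr h12) (sub_nonneg.mpr f1)]
  refine ⟨key, ?_⟩
  have htrS : S.trace = s₁ + s₂ + s₃ := by
    simp [Matrix.trace, Matrix.diag, hS, Fin.sum_univ_three]
  rw [Matrix.trace_sub, htrS]
  linarith
end

section
/- Let A be a real 3×3 matrix with proper singular value decomposition A = U · diag(s₁, s₂, s₃) · Vᵀ, where U, V ∈ SO(3), s₁ ≥ s₂ ≥ |s₃|, and suppose s₂ + s₃ > 0. Then for R ∈ SO(3), the equality tr(Aᵀ R) = s₁ + s₂ + s₃ holds if and only if R = U Vᵀ. Consequently the mode of the rotation Laplace distribution (equivalently, of the matrix Fisher distribution) with parameter A is the unique rotation R₀ = U Vᵀ. -/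
open Matrix

private lemma sq3_le_one {x y z : ℝ} (h : x * x + y * y + z * z = 1) : x ≤ 1 := by
  nlinarith [sq_nonneg (x - 1), sq_nonneg y, sq_nonneg z]

private lemma sq3_zero {x y z : ℝ} (h : x * x + y * y + z * z = 1) (hx : x = 1) :
    y = 0 ∧ z = 0 := by
  constructor <;> nlinarith [sq_nonneg y, sq_nonneg z]

private lemma weights_force {s₁ s₂ s₃ q0 q1 q2 : ℝ}
    (h12 : s₁ ≥ s₂) (hs3 : s₃ ≤ s₂) (hpos : s₂ + s₃ > 0)
    (hb0 : q0 ≤ 1) (hb1 : q1 ≤ 1) (hb2 : q2 ≤ 1)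
    (ht : 0 ≤ 1 - q0 - q1 + q2)
    (heq : s₁ * q0 + s₂ * q1 + s₃ * q2 = s₁ + s₂ + s₃) :
    q0 = 1 ∧ q1 = 1 ∧ q2 = 1 := by
  have h1 : (s₁ - s₂) * (1 - q0) ≥ 0 :=
    mul_nonneg (by linarith) (by linarith)
  have h2 : (s₂ - s₃) * (1 - q0 - q1 + q2) ≥ 0 :=
    mul_nonneg (by linarith) ht
  have h3 : (s₂ + s₃) * (3 - q0 - q1 - q2) ≤ 0 := by nlinarith [h1, h2]
  have h4 : 3 - q0 - q1 - q2 ≤ 0 := by nlinarith [h3, hpos]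
  exact ⟨by linarith, by linarith, by linarith⟩

private lemma so3_weighted_eq (Q : Matrix (Fin 3) (Fin 3) ℝ) (hQ : SO3 Q)
    (s₁ s₂ s₃ : ℝ) (h12 : s₁ ≥ s₂) (h23 : s₂ ≥ |s₃|) (hpos : s₂ + s₃ > 0)
    (heq : s₁ * Q 0 0 + s₂ * Q 1 1 + s₃ * Q 2 2 = s₁ + s₂ + s₃) : Q = 1 := by
  obtain ⟨horth, hdet⟩ := hQ
  have hc : ∀ i j, Q 0 i * Q 0 j + Q 1 i * Q 1 j + Q 2 i * Q 2 j
      = if i = j then 1 else 0 := by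
    intro i j
    have := congrFun (congrFun horth i) j
    simpa [Matrix.mul_apply, Fin.sum_univ_three, Matrix.one_apply] using this
  have hc00 : Q 0 0 * Q 0 0 + Q 1 0 * Q 1 0 + Q 2 0 * Q 2 0 = 1 := by
    simpa using hc 0 0
  have hc11 : Q 0 1 * Q 0 1 + Q 1 1 * Q 1 1 + Q 2 1 * Q 2 1 = 1 := by
    simpa using hc 1 1
  have hc22 : Q 0 2 * Q 0 2 + Q 1 2 * Q 1 2 + Q 2 2 * Q 2 2 = 1 := by
    simpa using hc 2 2
  have hc12 : Q 0 1 * Q 0 2 + Q 1 1 * Q 1 2 + Q 2 1 * Q 2 2 = 0 := by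
    simpa using hc 1 2
  -- adjugate Q = Qᵀ
  have hadj : Q.adjugate = Qᵀ := by
    have h1 : Q * Q.adjugate = 1 := by
      rw [Matrix.mul_adjugate, hdet, one_smul]
    calc Q.adjugate = 1 * Q.adjugate := (Matrix.one_mul _).symm
      _ = (Qᵀ * Q) * Q.adjugate := by rw [horth]
      _ = Qᵀ * (Q * Q.adjugate) := by rw [Matrix.mul_assoc]
      _ = Qᵀ := by rw [h1, Matrix.mul_one]
  have hE00 : Q 1 1 * Q 2 2 - Q 1 2 * Q 2 1 = Q 0 0 := by
    have := congrFun (congrFun hadj 0) 0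
    rw [Matrix.adjugate_fin_three] at this
    simpa using this
  have hE01 : -(Q 0 1 * Q 2 2) + Q 0 2 * Q 2 1 = Q 1 0 := by
    have := congrFun (congrFun hadj 0) 1
    rw [Matrix.adjugate_fin_three] at this
    simpa using this
  have hE02 : Q 0 1 * Q 1 2 - Q 0 2 * Q 1 1 = Q 2 0 := by
    have := congrFun (congrFun hadj 0) 2
    rw [Matrix.adjugate_fin_three] at this
    simpa using this
  -- the key sum-of-squares identity
  have hid : 4 * (1 - Q 0 0 - Q 1 1 + Q 2 2)
      = (Q 1 0 - Q 0 1) ^ 2 + (Q 0 2 + Q 2 0) ^ 2 + (Q 1 2 + Q 2 1) ^ 2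
        + (1 - Q 0 0 - Q 1 1 + Q 2 2) ^ 2 := by
    linear_combination (-1 : ℝ) * hc00 + (-1 - 2 * Q 2 2) * hc11
      + (-1 + 2 * Q 1 1) * hc22 + (-2 * Q 1 2 + 2 * Q 2 1) * hc12
      + (2 + 2 * Q 1 1 - 2 * Q 2 2) * hE00 + (-2 * Q 0 1) * hE01
      + (2 * Q 0 2) * hE02
  have ht : 0 ≤ 1 - Q 0 0 - Q 1 1 + Q 2 2 := by
    nlinarith [hid, sq_nonneg (Q 1 0 - Q 0 1), sq_nonneg (Q 0 2 + Q 2 0),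
      sq_nonneg (Q 1 2 + Q 2 1), sq_nonneg (1 - Q 0 0 - Q 1 1 + Q 2 2)]
  have hb0 : Q 0 0 ≤ 1 := sq3_le_one hc00
  have hb1 : Q 1 1 ≤ 1 := sq3_le_one (by linarith [hc11] :
    Q 1 1 * Q 1 1 + Q 0 1 * Q 0 1 + Q 2 1 * Q 2 1 = 1)
  have hb2 : Q 2 2 ≤ 1 := sq3_le_one (by linarith [hc22] :
    Q 2 2 * Q 2 2 + Q 0 2 * Q 0 2 + Q 1 2 * Q 1 2 = 1)
  have hs3 : s₃ ≤ s₂ := le_trans (le_abs_self s₃) h23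
  obtain ⟨e0, e1, e2⟩ := weights_force h12 hs3 hpos hb0 hb1 hb2 ht heq
  obtain ⟨z10, z20⟩ := sq3_zero hc00 e0
  obtain ⟨z01, z21⟩ := sq3_zero (show Q 1 1 * Q 1 1 + Q 0 1 * Q 0 1 + Q 2 1 * Q 2 1 = 1 by
    linarith [hc11]) e1
  obtain ⟨z02, z12⟩ := sq3_zero (show Q 2 2 * Q 2 2 + Q 0 2 * Q 0 2 + Q 1 2 * Q 1 2 = 1 by
    linarith [hc22]) e2
  ext i j
  fin_cases i <;> fin_cases j <;>
    simp [Matrix.one_apply, e0, e1, e2, z10, z20, z01, z21, z02, z12]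

private lemma cancel_left {X Y Z : Matrix (Fin 3) (Fin 3) ℝ} (h : X * Y = 1) :
    X * (Y * Z) = Z := by rw [← Matrix.mul_assoc, h, Matrix.one_mul]

/-- If `A = U · diag(s₁, s₂, s₃) · Vᵀ` is a proper SVD of `A` with `s₂ + s₃ > 0`, then
for rotations `R`, equality `tr(AᵀR) = s₁ + s₂ + s₃` holds iff `R = UVᵀ`.  Hence the mode
of the rotation Laplace (equivalently, matrix Fisher) distribution with parameter `A`
is the unique rotation `R₀ = UVᵀ`. -/
theorem trace_eq_sum_singular_values_iff_mode
    (A U V : Matrix (Fin 3) (Fin 3) ℝ) (s₁ s₂ s₃ : ℝ)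
    (hU : SO3 U) (hV : SO3 V) (h12 : s₁ ≥ s₂) (h23 : s₂ ≥ |s₃|)
    (hpos : s₂ + s₃ > 0)
    (hA : A = U * Matrix.diagonal ![s₁, s₂, s₃] * Vᵀ)
    (R : Matrix (Fin 3) (Fin 3) ℝ) (hR : SO3 R) :
    (Aᵀ * R).trace = s₁ + s₂ + s₃ ↔ R = U * Vᵀ := by
  have hUU : U * Uᵀ = 1 := mul_eq_one_comm.mp hU.1
  have hVV : V * Vᵀ = 1 := mul_eq_one_comm.mp hV.1
  set Q : Matrix (Fin 3) (Fin 3) ℝ := Uᵀ * R * V with hQdef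
  have hQorth : Qᵀ * Q = 1 := by
    rw [hQdef]
    simp only [Matrix.transpose_mul, Matrix.transpose_transpose, Matrix.mul_assoc]
    rw [cancel_left hUU, cancel_left hR.1, hV.1]
  have hQdet : Q.det = 1 := by
    rw [hQdef]
    simp [Matrix.det_mul, Matrix.det_transpose, hU.2, hV.2, hR.2]
  have htr : (Aᵀ * R).trace = s₁ * Q 0 0 + s₂ * Q 1 1 + s₃ * Q 2 2 := by
    have h1 : Aᵀ * R = V * (Matrix.diagonal ![s₁, s₂, s₃] * (Uᵀ * R)) := by
      rw [hA]
      simp only [Matrix.transpose_mul, Matrix.transpose_transpose,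
        Matrix.diagonal_transpose, Matrix.mul_assoc]
    rw [h1, Matrix.trace_mul_comm, Matrix.mul_assoc, ← hQdef]
    simp [Matrix.trace, Matrix.diag, Matrix.diagonal_mul, Fin.sum_univ_three]
  constructor
  · intro h
    have hQ1 : Q = 1 := so3_weighted_eq Q ⟨hQorth, hQdet⟩ s₁ s₂ s₃ h12 h23 hpos
      (by rw [← htr]; exact h)
    have : U * (Q * Vᵀ) = U * (1 * Vᵀ) := by rw [hQ1]
    rw [hQdef] at this
    simp only [Matrix.one_mul, Matrix.mul_assoc] at this
    rw [hVV, Matrix.mul_one, cancel_left hUU] at this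
    exact this
  · intro h
    have hQ1 : Q = 1 := by
      rw [hQdef, h]
      simp only [Matrix.mul_assoc]
      rw [hV.1, Matrix.mul_one, hU.1]
    rw [htr, hQ1]
    simp [Matrix.one_apply]
end

section
/- Let S = diag(s₁, s₂, s₃) be a real 3×3 diagonal matrix. Then for every nonzero ψ = (ψ₁, ψ₂, ψ₃) ∈ ℝ³ with θ = ‖ψ‖, tr(S) − tr(S · exp(ψ̂)) = ((1 − cos θ)/θ²) · ((s₂ + s₃)ψ₁² + (s₁ + s₃)ψ₂² + (s₁ + s₂)ψ₃²). -/
open Matrix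

/-- The skew-symmetric "hat" matrix of a vector `ψ ∈ ℝ³`. -/
def hat (ψ : EuclideanSpace ℝ (Fin 3)) : Matrix (Fin 3) (Fin 3) ℝ :=
  !![0, -ψ 2, ψ 1;
     ψ 2, 0, -ψ 0;
     -ψ 1, ψ 0, 0]

/-- For a diagonal matrix `S = diag(s₁, s₂, s₃)` and nonzero `ψ ∈ ℝ³` with `θ = ‖ψ‖`,
`tr S − tr(S · exp(ψ̂)) = ((1 − cos θ)/θ²)((s₂+s₃)ψ₁² + (s₁+s₃)ψ₂² + (s₁+s₂)ψ₃²)`. -/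
theorem trace_diagonal_sub_trace_mul_exp_hat
    (s₁ s₂ s₃ : ℝ) (ψ : EuclideanSpace ℝ (Fin 3)) (hψ : ψ ≠ 0) (θ : ℝ) (hθ : θ = ‖ψ‖) :
    (Matrix.diagonal ![s₁, s₂, s₃]).trace
        - (Matrix.diagonal ![s₁, s₂, s₃] * NormedSpace.exp (hat ψ)).trace
      = ((1 - Real.cos θ) / θ ^ 2)
          * ((s₂ + s₃) * ψ 0 ^ 2 + (s₁ + s₃) * ψ 1 ^ 2 + (s₁ + s₂) * ψ 2 ^ 2) := by
  have hθ0 : θ ≠ 0 := by rw [hθ]; simpa using hψ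
  have hθ2 : θ ^ 2 = ψ 0 ^ 2 + ψ 1 ^ 2 + ψ 2 ^ 2 := by
    rw [hθ, EuclideanSpace.norm_eq, Real.sq_sqrt (by positivity)]
    simp [Fin.sum_univ_three, Real.norm_eq_abs, sq_abs]
  set A := hat ψ with hA
  have h3 : A ^ 3 = (-θ ^ 2) • A := by
    rw [hθ2]
    ext i j
    fin_cases i <;> fin_cases j <;>
      simp [hA, hat, pow_succ, Matrix.mul_apply, Fin.sum_univ_three] <;> ring
  have hodd_pow : ∀ k : ℕ, A ^ (2 * k + 1) = ((-θ ^ 2) ^ k) • A := by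
    intro k
    induction k with
    | zero => simp
    | succ n ih =>
      have h : 2 * (n + 1) + 1 = (2 * n + 1) + 2 := by ring
      rw [h, pow_add, ih, smul_mul_assoc, ← pow_succ', h3, smul_smul, ← pow_succ]
  have heven_pow : ∀ k : ℕ, A ^ (2 * (k + 1)) = ((-θ ^ 2) ^ k) • A ^ 2 := by
    intro k
    have h : 2 * (k + 1) = (2 * k + 1) + 1 := by ring
    rw [h, pow_succ, hodd_pow, smul_mul_assoc, ← pow_two]
  have hsin : HasSum (fun n : ℕ => (-1 : ℝ) ^ n * θ ^ (2 * n) / (2 * n + 1).factorial)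
      (Real.sin θ / θ) := by
    have h := (Real.hasSum_sin θ).div_const θ
    have e : (fun n : ℕ => (-1 : ℝ) ^ n * θ ^ (2 * n + 1) / ((2 * n + 1).factorial : ℝ) / θ)
        = fun n : ℕ => (-1 : ℝ) ^ n * θ ^ (2 * n) / (2 * n + 1).factorial := by
      funext n
      have hf : ((2 * n + 1).factorial : ℝ) ≠ 0 := by positivity
      field_simp
      ring
    rwa [e] at h
  have hcos2 : HasSum (fun n : ℕ => (-1 : ℝ) ^ n * θ ^ (2 * n) / (2 * n + 2).factorial)
      ((1 - Real.cos θ) / θ ^ 2) := by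
    have h := (hasSum_nat_add_iff' (f := fun n : ℕ => (-1 : ℝ) ^ n * θ ^ (2 * n) / (2 * n).factorial)
      1).2 (Real.hasSum_cos θ)
    have h2 := (h.neg).div_const (θ ^ 2)
    have e : (fun n : ℕ =>
          -((-1 : ℝ) ^ (n + 1) * θ ^ (2 * (n + 1)) / ((2 * (n + 1)).factorial : ℝ)) / θ ^ 2)
        = fun n : ℕ => (-1 : ℝ) ^ n * θ ^ (2 * n) / (2 * n + 2).factorial := by
      funext n
      have h21 : 2 * (n + 1) = 2 * n + 2 := by ring
      rw [h21]
      have hf : ((2 * n + 2).factorial : ℝ) ≠ 0 := by positivity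
      field_simp
      ring
    rw [e] at h2
    convert h2 using 1
    · rfl
    · simp
  have hodd : HasSum (fun k : ℕ => (((2 * k + 1).factorial : ℝ)⁻¹) • A ^ (2 * k + 1))
      ((Real.sin θ / θ) • A) := by
    have h := hsin.smul_const A
    have e : (fun n : ℕ => ((-1 : ℝ) ^ n * θ ^ (2 * n) / (2 * n + 1).factorial) • A)
        = fun k : ℕ => (((2 * k + 1).factorial : ℝ)⁻¹) • A ^ (2 * k + 1) := by
      funext k
      rw [hodd_pow, smul_smul, neg_pow, pow_mul]
      congr 1
      ring
    rwa [e] at h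
  have heven : HasSum (fun k : ℕ => (((2 * k).factorial : ℝ)⁻¹) • A ^ (2 * k))
      (((1 - Real.cos θ) / θ ^ 2) • A ^ 2 + 1) := by
    have h := hcos2.smul_const (A ^ 2)
    have e : (fun n : ℕ => ((-1 : ℝ) ^ n * θ ^ (2 * n) / (2 * n + 2).factorial) • A ^ 2)
        = fun k : ℕ => (((2 * (k + 1)).factorial : ℝ)⁻¹) • A ^ (2 * (k + 1)) := by
      funext k
      rw [heven_pow, smul_smul, neg_pow, pow_mul]
      have h21 : 2 * (k + 1) = 2 * k + 2 := by ring
      rw [h21]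
      congr 1
      ring
    rw [e] at h
    have h2 : HasSum (fun k : ℕ => (((2 * k).factorial : ℝ)⁻¹) • A ^ (2 * k))
        ((((1 - Real.cos θ) / θ ^ 2) • A ^ 2)
          + ∑ i ∈ Finset.range 1, (((2 * i).factorial : ℝ)⁻¹) • A ^ (2 * i)) :=
      (hasSum_nat_add_iff
        (f := fun k : ℕ => (((2 * k).factorial : ℝ)⁻¹) • A ^ (2 * k)) 1).1 h
    convert h2 using 1
    simp
  have hexp : NormedSpace.exp A
      = 1 + (Real.sin θ / θ) • A + ((1 - Real.cos θ) / θ ^ 2) • A ^ 2 := by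
    simp only [NormedSpace.exp_eq_tsum (𝕂 := ℝ)]
    have h := HasSum.even_add_odd
      (f := fun n : ℕ => ((n.factorial : ℝ))⁻¹ • A ^ n) heven hodd
    rw [h.tsum_eq]
    abel
  rw [hexp]
  have hd : ∀ i j, A i j = hat ψ i j := fun i j => rfl
  simp only [Matrix.trace_fin_three, Matrix.mul_apply, Fin.sum_univ_three, Matrix.add_apply,
    Matrix.smul_apply, Matrix.one_apply, Matrix.diagonal_apply, pow_two, hA, hat,
    Matrix.cons_val', Matrix.cons_val_zero, Matrix.cons_val_one, Matrix.head_cons,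
    Matrix.empty_val', Matrix.cons_val_fin_one, Matrix.head_fin_const]
  simp [Matrix.mul_apply, Fin.sum_univ_three, hat, smul_eq_mul]
  field_simp
  nlinarith [hθ2, sq_nonneg θ]
end

section
/- Let A be a real 3×3 matrix with proper singular value decomposition A = U · S · Vᵀ, where U, V ∈ SO(3) and S = diag(s₁, s₂, s₃). Then for every nonzero ψ = (ψ₁, ψ₂, ψ₃) ∈ ℝ³ with θ = ‖ψ‖, the rotation R = U · exp(ψ̂) · Vᵀ satisfies tr(S − Aᵀ R) = ((1 − cos θ)/θ²) · ((s₂ + s₃)ψ₁² + (s₁ + s₃)ψ₂² + (s₁ + s₂)ψ₃²). -/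
open Matrix

attribute [local instance] Matrix.linftyOpNormedRing Matrix.linftyOpNormedAlgebra

namespace TraceAux

lemma norm_sq (ψ : EuclideanSpace ℝ (Fin 3)) : ‖ψ‖ ^ 2 = ψ 0 ^ 2 + ψ 1 ^ 2 + ψ 2 ^ 2 := by
  rw [EuclideanSpace.norm_eq, Real.sq_sqrt (by positivity)]
  simp [Fin.sum_univ_three, Real.norm_eq_abs, sq_abs]

lemma hat_cube (ψ : EuclideanSpace ℝ (Fin 3)) :
    hat ψ ^ 3 = (-(ψ 0 ^ 2 + ψ 1 ^ 2 + ψ 2 ^ 2)) • hat ψ := by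
  ext i j
  fin_cases i <;> fin_cases j <;>
    simp [hat, pow_succ, Matrix.mul_apply, Fin.sum_univ_three] <;> ring

lemma pow_odd (M : Matrix (Fin 3) (Fin 3) ℝ) (c : ℝ) (h3 : M ^ 3 = c • M) (k : ℕ) :
    M ^ (2 * k + 1) = c ^ k • M := by
  induction k with
  | zero => simp
  | succ n ih =>
    have h : 2 * (n + 1) + 1 = (2 * n + 1) + 2 := by ring
    have hMM : M * M ^ 2 = M ^ 3 := (pow_succ' M 2).symm
    rw [h, pow_add, ih, smul_mul_assoc, hMM, h3, smul_smul, pow_succ]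

lemma pow_even (M : Matrix (Fin 3) (Fin 3) ℝ) (c : ℝ) (h3 : M ^ 3 = c • M) (k : ℕ) :
    M ^ (2 * k + 2) = c ^ k • M ^ 2 := by
  have h : 2 * k + 2 = (2 * k + 1) + 1 := by ring
  rw [h, pow_succ, pow_odd M c h3, smul_mul_assoc, ← pow_two]

lemma trace_S_mul_hat (s₁ s₂ s₃ : ℝ) (ψ : EuclideanSpace ℝ (Fin 3)) :
    (Matrix.diagonal ![s₁, s₂, s₃] * hat ψ).trace = 0 := by
  simp [Matrix.trace, Matrix.diag, Matrix.mul_apply, Fin.sum_univ_three, hat,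
    Matrix.diagonal]

lemma trace_S_mul_hat_sq (s₁ s₂ s₃ : ℝ) (ψ : EuclideanSpace ℝ (Fin 3)) :
    (Matrix.diagonal ![s₁, s₂, s₃] * hat ψ ^ 2).trace
      = -((s₂ + s₃) * ψ 0 ^ 2 + (s₁ + s₃) * ψ 1 ^ 2 + (s₁ + s₂) * ψ 2 ^ 2) := by
  simp [Matrix.trace, Matrix.diag, pow_two, Matrix.mul_apply, Fin.sum_univ_three, hat,
    Matrix.diagonal]
  ring

end TraceAux

/-- If `A = U · S · Vᵀ` with `U, V ∈ SO(3)` and `S = diag(s₁, s₂, s₃)`, then for every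
nonzero `ψ ∈ ℝ³` with `θ = ‖ψ‖`, the rotation `R = U exp(ψ̂) Vᵀ` satisfies
`tr(S − AᵀR) = ((1 − cos θ)/θ²)((s₂+s₃)ψ₁² + (s₁+s₃)ψ₂² + (s₁+s₂)ψ₃²)`. -/
theorem trace_S_sub_AT_R_of_exp_hat
    (A U V : Matrix (Fin 3) (Fin 3) ℝ) (s₁ s₂ s₃ : ℝ)
    (hU : SO3 U) (hV : SO3 V)
    (hA : A = U * Matrix.diagonal ![s₁, s₂, s₃] * Vᵀ)
    (ψ : EuclideanSpace ℝ (Fin 3)) (hψ : ψ ≠ 0) (θ : ℝ) (hθ : θ = ‖ψ‖) :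
    (Matrix.diagonal ![s₁, s₂, s₃] - Aᵀ * (U * NormedSpace.exp (hat ψ) * Vᵀ)).trace
      = ((1 - Real.cos θ) / θ ^ 2)
          * ((s₂ + s₃) * ψ 0 ^ 2 + (s₁ + s₃) * ψ 1 ^ 2 + (s₁ + s₂) * ψ 2 ^ 2) := by
  obtain ⟨hU1, -⟩ := hU
  obtain ⟨hV1, -⟩ := hV
  have hθ0 : θ ≠ 0 := by
    rw [hθ]; exact norm_ne_zero_iff.mpr hψ
  set S : Matrix (Fin 3) (Fin 3) ℝ := Matrix.diagonal ![s₁, s₂, s₃] with hS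
  set M : Matrix (Fin 3) (Fin 3) ℝ := hat ψ with hM
  set E : Matrix (Fin 3) (Fin 3) ℝ := NormedSpace.exp M with hE
  set Q : ℝ := (s₂ + s₃) * ψ 0 ^ 2 + (s₁ + s₃) * ψ 1 ^ 2 + (s₁ + s₂) * ψ 2 ^ 2 with hQ
  -- θ² and the cube relation
  have ht : θ ^ 2 = ψ 0 ^ 2 + ψ 1 ^ 2 + ψ 2 ^ 2 := by rw [hθ]; exact TraceAux.norm_sq ψ
  have h3 : M ^ 3 = (-θ ^ 2) • M := by
    rw [hM, TraceAux.hat_cube, ht]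
  set c : ℝ := -θ ^ 2 with hc
  -- Step 1: reduce the trace
  have hAT : Aᵀ = V * (S * Uᵀ) := by
    rw [hA]
    simp [Matrix.transpose_mul, Matrix.mul_assoc, hS]
  have hprod : Aᵀ * (U * E * Vᵀ) = V * (S * E) * Vᵀ := by
    rw [hAT]
    simp only [Matrix.mul_assoc]
    rw [← Matrix.mul_assoc Uᵀ U, hU1, Matrix.one_mul]
  have key : (S - Aᵀ * (U * E * Vᵀ)).trace = S.trace - (S * E).trace := by
    rw [Matrix.trace_sub, hprod, Matrix.trace_mul_cycle, hV1, Matrix.one_mul]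
  -- Step 2: trace of S * exp as a series
  have hsum : Summable fun n : ℕ => ((n.factorial : ℝ))⁻¹ • M ^ n :=
    NormedSpace.expSeries_summable' (𝕂 := ℝ) M
  let L0 : Matrix (Fin 3) (Fin 3) ℝ →ₗ[ℝ] ℝ :=
    (Matrix.traceLinearMap (Fin 3) ℝ ℝ).comp (LinearMap.mulLeft ℝ S)
  let L : Matrix (Fin 3) (Fin 3) ℝ →L[ℝ] ℝ := LinearMap.toContinuousLinearMap L0
  have hL : ∀ X, L X = (S * X).trace := fun X => rfl
  have hEtsum : E = ∑' n : ℕ, ((n.factorial : ℝ))⁻¹ • M ^ n := by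
    rw [hE, NormedSpace.exp_eq_tsum (𝕂 := ℝ)]
  set a : ℕ → ℝ := fun n => ((n.factorial : ℝ))⁻¹ * (S * M ^ n).trace with ha
  have haL : ∀ n, L (((n.factorial : ℝ))⁻¹ • M ^ n) = a n := by
    intro n
    rw [L.map_smul, hL, smul_eq_mul]
  have hSE : (S * E).trace = ∑' n : ℕ, a n := by
    rw [← hL, hEtsum, L.map_tsum hsum]
    exact tsum_congr haL
  have hasum : Summable a := by
    have := (L.summable hsum)
    simpa [haL] using this
  -- values of a
  have htr1 : (S * M).trace = 0 := TraceAux.trace_S_mul_hat s₁ s₂ s₃ ψ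
  have htr2 : (S * M ^ 2).trace = -Q := TraceAux.trace_S_mul_hat_sq s₁ s₂ s₃ ψ
  have haodd : ∀ k : ℕ, a (2 * k + 1) = 0 := by
    intro k
    rw [ha]
    simp only [TraceAux.pow_odd M c h3 k, Matrix.mul_smul, Matrix.trace_smul, htr1]
    simp
  have haeven : ∀ k : ℕ, a (2 * k + 2) = (((2 * k + 2).factorial : ℝ))⁻¹ * (c ^ k * (-Q)) := by
    intro k
    rw [ha]
    simp only [TraceAux.pow_even M c h3 k, Matrix.mul_smul, Matrix.trace_smul, htr2]
    simp [mul_comm, mul_assoc]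
  have ha0 : a 0 = S.trace := by simp [ha]
  -- summability of subsequences
  have hsum_even : Summable fun k : ℕ => a (2 * k) :=
    hasum.comp_injective (fun x y h => by omega)
  have hsum_odd : Summable fun k : ℕ => a (2 * k + 1) :=
    hasum.comp_injective (fun x y h => by omega)
  have hsplit : (∑' k : ℕ, a (2 * k)) + (∑' k : ℕ, a (2 * k + 1)) = ∑' n : ℕ, a n :=
    tsum_even_add_odd hsum_even hsum_odd
  have hodd0 : (∑' k : ℕ, a (2 * k + 1)) = 0 := by
    simp [haodd]
  have heven_shift : (∑' k : ℕ, a (2 * k)) = a 0 + ∑' k : ℕ, a (2 * (k + 1)) := by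
    have h := Summable.tsum_eq_zero_add (f := fun k : ℕ => a (2 * k)) hsum_even
    simpa using h
  -- the cosine series
  set T : ℝ := ∑' k : ℕ, (((2 * k + 2).factorial : ℝ))⁻¹ * c ^ k with hT
  have hg : Summable fun n : ℕ => (-1 : ℝ) ^ n * θ ^ (2 * n) / ((2 * n).factorial : ℝ) :=
    (Real.hasSum_cos θ).summable
  have hcos : Real.cos θ = ∑' n : ℕ, (-1 : ℝ) ^ n * θ ^ (2 * n) / ((2 * n).factorial : ℝ) :=
    (Real.hasSum_cos θ).tsum_eq.symm
  have hcos_shift : Real.cos θ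
      = 1 + ∑' n : ℕ, (-1 : ℝ) ^ (n + 1) * θ ^ (2 * (n + 1)) / ((2 * (n + 1)).factorial : ℝ) := by
    rw [hcos, Summable.tsum_eq_zero_add hg]
    norm_num
  have hterm : ∀ n : ℕ, (-1 : ℝ) ^ (n + 1) * θ ^ (2 * (n + 1)) / ((2 * (n + 1)).factorial : ℝ)
      = -(θ ^ 2 * ((((2 * n + 2).factorial : ℝ))⁻¹ * c ^ n)) := by
    intro n
    have h1 : 2 * (n + 1) = 2 * n + 2 := by ring
    have h2 : ((-θ ^ 2 : ℝ)) ^ n = (-1) ^ n * θ ^ (2 * n) := by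
      rw [neg_pow, ← pow_mul]
    have hf : ((2 * n + 2).factorial : ℝ) ≠ 0 := by positivity
    rw [h1, hc, h2]
    field_simp
    ring
  have hone_sub_cos : 1 - Real.cos θ = θ ^ 2 * T := by
    rw [hcos_shift, hT]
    have : (∑' n : ℕ, (-1 : ℝ) ^ (n + 1) * θ ^ (2 * (n + 1)) / ((2 * (n + 1)).factorial : ℝ))
        = ∑' n : ℕ, -(θ ^ 2 * ((((2 * n + 2).factorial : ℝ))⁻¹ * c ^ n)) := tsum_congr hterm
    rw [this, tsum_neg, ← tsum_mul_left]
    ring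
  -- assemble the even sum
  have heven_val : (∑' k : ℕ, a (2 * (k + 1))) = -Q * T := by
    have : (∑' k : ℕ, a (2 * (k + 1))) = ∑' k : ℕ, -Q * ((((2 * k + 2).factorial : ℝ))⁻¹ * c ^ k) := by
      refine tsum_congr fun k => ?_
      have h1 : 2 * (k + 1) = 2 * k + 2 := by ring
      rw [h1, haeven k]; ring
    rw [this, tsum_mul_left, hT]
  have htsum_a : (∑' n : ℕ, a n) = S.trace + (-Q * T) := by
    rw [← hsplit, hodd0, add_zero, heven_shift, ha0, heven_val]
  -- final computation
  rw [key, hSE, htsum_a]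
  have hQT : ((1 - Real.cos θ) / θ ^ 2) * Q = T * Q := by
    rw [hone_sub_cos]
    field_simp
  rw [hQT]
  ring
end

section
/- (Local Gaussian/Laplace approximation near the mode) Let S = diag(s₁, s₂, s₃) be a real 3×3 diagonal matrix. Then the remainder ψ ↦ tr(S) − tr(S · exp(ψ̂)) − (1/2)·((s₂ + s₃)ψ₁² + (s₁ + s₃)ψ₂² + (s₁ + s₂)ψ₃²) is O(‖ψ‖⁴) as ψ → 0 in ℝ³; that is, there exist constants C > 0 and δ > 0 such that for all ψ with ‖ψ‖ < δ the absolute value of the remainder is at most C·‖ψ‖⁴. Hence near the mode, tr(S − Sᵀexp(ψ̂)) agrees with the quadratic form (1/2)ψᵀ diag(s₂+s₃, s₁+s₃, s₁+s₂) ψ to fourth order, so that the matrix Fisher density is approximated by a zero-mean multivariate Gaussian in ψ and the rotation Laplace density is approximated by a zero-mean multivariate Laplace in ψ. -/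
open Matrix

open NormedSpace in
lemma exp_tail_aux {𝔸 : Type*} [NormedRing 𝔸] [NormedAlgebra ℝ 𝔸] [CompleteSpace 𝔸] (x : 𝔸) :
    ‖NormedSpace.exp x - ∑ i ∈ Finset.range 4, ((i.factorial : ℝ))⁻¹ • x ^ i‖
      ≤ Real.exp ‖x‖ * ‖x‖ ^ 4 := by
  have hs : Summable fun n : ℕ => ((n.factorial : ℝ))⁻¹ • x ^ n := expSeries_summable' x
  have heq : exp x - ∑ i ∈ Finset.range 4, ((i.factorial : ℝ))⁻¹ • x ^ i
      = ∑' n : ℕ, ((n + 4).factorial : ℝ)⁻¹ • x ^ (n + 4) := by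
    have := (Summable.sum_add_tsum_nat_add (f := fun n : ℕ => ((n.factorial : ℝ))⁻¹ • x ^ n) 4 hs)
    simp only [exp_eq_tsum (𝕂 := ℝ)]
    rw [← this]
    abel
  rw [heq]
  have hb : ∀ n : ℕ, ‖((n + 4).factorial : ℝ)⁻¹ • x ^ (n + 4)‖
      ≤ ((n.factorial : ℝ))⁻¹ * ‖x‖ ^ n * ‖x‖ ^ 4 := by
    intro n
    rw [norm_smul]
    have h1 : ‖x ^ (n + 4)‖ ≤ ‖x‖ ^ (n + 4) := norm_pow_le' x (by omega)
    have h2 : (((n + 4).factorial : ℝ))⁻¹ ≤ ((n.factorial : ℝ))⁻¹ := by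
      apply inv_anti₀
      · positivity
      · exact_mod_cast Nat.factorial_le (by omega)
    have h3 : ‖(((n + 4).factorial : ℝ))⁻¹‖ = (((n + 4).factorial : ℝ))⁻¹ := by
      rw [Real.norm_eq_abs, abs_of_nonneg (by positivity)]
    calc ‖(((n + 4).factorial : ℝ))⁻¹‖ * ‖x ^ (n + 4)‖
        ≤ ((n.factorial : ℝ))⁻¹ * ‖x‖ ^ (n + 4) := by
          rw [h3]; exact mul_le_mul h2 h1 (norm_nonneg _) (by positivity)
      _ = ((n.factorial : ℝ))⁻¹ * ‖x‖ ^ n * ‖x‖ ^ 4 := by rw [pow_add]; ring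
  have hs2 : Summable fun n : ℕ => ((n.factorial : ℝ))⁻¹ * ‖x‖ ^ n * ‖x‖ ^ 4 :=
    (Real.summable_pow_div_factorial ‖x‖).mul_right _ |>.congr fun n => by
      rw [div_eq_inv_mul]
  calc ‖∑' n : ℕ, ((n + 4).factorial : ℝ)⁻¹ • x ^ (n + 4)‖
      ≤ ∑' n : ℕ, (((n.factorial : ℝ))⁻¹ * ‖x‖ ^ n * ‖x‖ ^ 4) :=
        tsum_of_norm_bounded hs2.hasSum hb
    _ = ∑' n : ℕ, (‖x‖ ^ n / (n.factorial : ℝ)) * ‖x‖ ^ 4 :=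
        tsum_congr fun n => by ring
    _ = (∑' n : ℕ, ‖x‖ ^ n / (n.factorial : ℝ)) * ‖x‖ ^ 4 := tsum_mul_right
    _ = Real.exp ‖x‖ * ‖x‖ ^ 4 := by rw [Real.exp_eq_exp_ℝ, exp_eq_tsum_div]


lemma coord_le_norm (ψ : EuclideanSpace ℝ (Fin 3)) (i : Fin 3) : |ψ i| ≤ ‖ψ‖ := by
  rw [EuclideanSpace.norm_eq, ← Real.sqrt_sq_eq_abs]
  apply Real.sqrt_le_sqrt
  have : ψ i ^ 2 ≤ ∑ j, ‖ψ j‖ ^ 2 := by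
    have := Finset.single_le_sum (f := fun j => ‖ψ j‖ ^ 2)
      (fun j _ => sq_nonneg _) (Finset.mem_univ i)
    simpa [Real.norm_eq_abs, sq_abs] using this
  exact this

section Aux

attribute [local instance] Matrix.linftyOpNormedRing Matrix.linftyOpNormedAlgebra

lemma abs_entry_le_norm (E : Matrix (Fin 3) (Fin 3) ℝ) (i j : Fin 3) : |E i j| ≤ ‖E‖ := by
  have h1 : ‖E i j‖₊ ≤ ∑ k, ‖E i k‖₊ :=
    Finset.single_le_sum (f := fun k => ‖E i k‖₊) (fun k _ => zero_le) (Finset.mem_univ j)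
  have h2 : (∑ k, ‖E i k‖₊) ≤ (Finset.univ : Finset (Fin 3)).sup fun i => ∑ j, ‖E i j‖₊ :=
    Finset.le_sup (f := fun i => ∑ j, ‖E i j‖₊) (Finset.mem_univ i)
  have := h1.trans h2
  rw [Matrix.linfty_opNorm_def]
  calc |E i j| = ‖E i j‖ := (Real.norm_eq_abs _).symm
    _ ≤ _ := by exact_mod_cast this

lemma norm_le_of_rows (E : Matrix (Fin 3) (Fin 3) ℝ) {r : ℝ} (h0 : 0 ≤ r)
    (h : ∀ i, ∑ j, |E i j| ≤ r) : ‖E‖ ≤ r := by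
  have hb : ∀ i, (∑ j, ‖E i j‖₊ : NNReal) ≤ ⟨r, h0⟩ := fun i => by
    refine NNReal.coe_le_coe.mp ?_
    push_cast
    show _ ≤ r
    simpa [Real.norm_eq_abs] using h i
  rw [Matrix.linfty_opNorm_def]
  exact_mod_cast Finset.sup_le fun i _ => hb i

lemma key_bound (s₁ s₂ s₃ : ℝ) (ψ : EuclideanSpace ℝ (Fin 3)) (hψ : ‖ψ‖ < 1) :
    |(Matrix.diagonal ![s₁, s₂, s₃]).trace
        - (Matrix.diagonal ![s₁, s₂, s₃] * NormedSpace.exp (hat ψ)).trace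
        - (1 / 2) * ((s₂ + s₃) * ψ 0 ^ 2 + (s₁ + s₃) * ψ 1 ^ 2 + (s₁ + s₂) * ψ 2 ^ 2)|
      ≤ ((|s₁| + |s₂| + |s₃| + 1) * (Real.exp 2 * 16)) * ‖ψ‖ ^ 4 := by
  set A := hat ψ with hAdef
  set P : Matrix (Fin 3) (Fin 3) ℝ := ∑ i ∈ Finset.range 4, ((i.factorial : ℝ))⁻¹ • A ^ i
    with hPdef
  set S := Matrix.diagonal ![s₁, s₂, s₃] with hSdef
  set E := P - NormedSpace.exp A with hEdef
  have hψ0 := norm_nonneg ψ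
  have h0 := coord_le_norm ψ 0
  have h1 := coord_le_norm ψ 1
  have h2 := coord_le_norm ψ 2
  have ha0 := abs_nonneg (ψ 0)
  have ha1 := abs_nonneg (ψ 1)
  have ha2 := abs_nonneg (ψ 2)
  -- norm of A
  have hAnorm : ‖A‖ ≤ 2 * ‖ψ‖ := by
    apply norm_le_of_rows _ (by positivity)
    intro i
    fin_cases i <;>
      · simp [hAdef, hat, Fin.sum_univ_three, abs_neg]
        linarith
  -- trace identity
  have htr : (S * P).trace = S.trace
      - (1 / 2) * ((s₂ + s₃) * ψ 0 ^ 2 + (s₁ + s₃) * ψ 1 ^ 2 + (s₁ + s₂) * ψ 2 ^ 2) := by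
    simp only [hPdef, hSdef, hAdef, Finset.sum_range_succ, Finset.sum_range_zero, zero_add,
      pow_zero, pow_succ, pow_zero, one_mul, Nat.factorial]
    simp [Matrix.trace_fin_three, Matrix.mul_apply, Fin.sum_univ_three, hat,
      Matrix.diagonal, Matrix.one_apply]
    ring
  -- rewrite the remainder
  have hrem : S.trace - (S * NormedSpace.exp A).trace
      - (1 / 2) * ((s₂ + s₃) * ψ 0 ^ 2 + (s₁ + s₃) * ψ 1 ^ 2 + (s₁ + s₂) * ψ 2 ^ 2)
      = (S * E).trace := by
    rw [hEdef, Matrix.mul_sub, Matrix.trace_sub, htr]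
    ring
  rw [hrem]
  -- bound the trace
  have htrE : (S * E).trace = s₁ * E 0 0 + s₂ * E 1 1 + s₃ * E 2 2 := by
    simp [hSdef, Matrix.trace_fin_three, Matrix.mul_apply, Fin.sum_univ_three,
      Matrix.diagonal]
  have hE00 := abs_entry_le_norm E 0 0
  have hE11 := abs_entry_le_norm E 1 1
  have hE22 := abs_entry_le_norm E 2 2
  have hEnorm : ‖E‖ ≤ Real.exp 2 * 16 * ‖ψ‖ ^ 4 := by
    have h1 : ‖E‖ = ‖NormedSpace.exp A - P‖ := norm_sub_rev _ _
    have h2 : ‖NormedSpace.exp A - P‖ ≤ Real.exp ‖A‖ * ‖A‖ ^ 4 := exp_tail_aux A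
    have h3 : Real.exp ‖A‖ ≤ Real.exp 2 := by
      apply Real.exp_le_exp.2
      linarith
    have h4 : ‖A‖ ^ 4 ≤ (2 * ‖ψ‖) ^ 4 := by
      apply pow_le_pow_left₀ (norm_nonneg _) hAnorm
    have h5 : (2 * ‖ψ‖) ^ 4 = 16 * ‖ψ‖ ^ 4 := by ring
    have h6 : (0:ℝ) ≤ ‖A‖ ^ 4 := by positivity
    have h7 := (Real.exp_pos ‖A‖).le
    calc ‖E‖ = ‖NormedSpace.exp A - P‖ := h1
      _ ≤ Real.exp ‖A‖ * ‖A‖ ^ 4 := h2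
      _ ≤ Real.exp 2 * (16 * ‖ψ‖ ^ 4) := by
          rw [← h5]
          exact mul_le_mul h3 h4 h6 (Real.exp_pos 2).le
      _ = Real.exp 2 * 16 * ‖ψ‖ ^ 4 := by ring
  have hEn0 := norm_nonneg E
  rw [htrE]
  have habs : |s₁ * E 0 0 + s₂ * E 1 1 + s₃ * E 2 2|
      ≤ (|s₁| + |s₂| + |s₃|) * ‖E‖ := by
    calc |s₁ * E 0 0 + s₂ * E 1 1 + s₃ * E 2 2|
        ≤ |s₁ * E 0 0| + |s₂ * E 1 1| + |s₃ * E 2 2| := abs_add_three _ _ _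
      _ = |s₁| * |E 0 0| + |s₂| * |E 1 1| + |s₃| * |E 2 2| := by
          rw [abs_mul, abs_mul, abs_mul]
      _ ≤ (|s₁| + |s₂| + |s₃|) * ‖E‖ := by
          have b1 := mul_le_mul_of_nonneg_left hE00 (abs_nonneg s₁)
          have b2 := mul_le_mul_of_nonneg_left hE11 (abs_nonneg s₂)
          have b3 := mul_le_mul_of_nonneg_left hE22 (abs_nonneg s₃)
          nlinarith [abs_nonneg s₁, abs_nonneg s₂, abs_nonneg s₃]
  calc |s₁ * E 0 0 + s₂ * E 1 1 + s₃ * E 2 2|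
      ≤ (|s₁| + |s₂| + |s₃|) * ‖E‖ := habs
    _ ≤ ((|s₁| + |s₂| + |s₃| + 1) * (Real.exp 2 * 16)) * ‖ψ‖ ^ 4 := by
        nlinarith [abs_nonneg s₁, abs_nonneg s₂, abs_nonneg s₃, Real.exp_pos 2,
          pow_nonneg hψ0 4]

end Aux

/-- Local Gaussian/Laplace approximation near the mode: for `S = diag(s₁, s₂, s₃)`, the
remainder `tr S − tr(S exp(ψ̂)) − ½((s₂+s₃)ψ₁² + (s₁+s₃)ψ₂² + (s₁+s₂)ψ₃²)` is
`O(‖ψ‖⁴)` as `ψ → 0`. -/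
theorem trace_exp_hat_quadratic_approx (s₁ s₂ s₃ : ℝ) :
    ∃ C > (0 : ℝ), ∃ δ > (0 : ℝ), ∀ ψ : EuclideanSpace ℝ (Fin 3), ‖ψ‖ < δ →
      |(Matrix.diagonal ![s₁, s₂, s₃]).trace
          - (Matrix.diagonal ![s₁, s₂, s₃] * NormedSpace.exp (hat ψ)).trace
          - (1 / 2) * ((s₂ + s₃) * ψ 0 ^ 2 + (s₁ + s₃) * ψ 1 ^ 2 + (s₁ + s₂) * ψ 2 ^ 2)|
        ≤ C * ‖ψ‖ ^ 4 := by
  refine ⟨(|s₁| + |s₂| + |s₃| + 1) * (Real.exp 2 * 16), by positivity, 1, one_pos,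
    fun ψ hψ => ?_⟩
  exact key_bound s₁ s₂ s₃ ψ hψ
end

section
/- (Core identity for the equivalence of rotation Laplace and quaternion Laplace distributions) Let S = diag(s₁, s₂, s₃) be a real 3×3 diagonal matrix. Then for every unit quaternion q = w + xi + yj + zk, tr(S) − tr(S · γ(q)) = 2(s₂ + s₃)x² + 2(s₁ + s₃)y² + 2(s₁ + s₂)z². In particular, tr(S − Sᵀγ(q)) is a quadratic form in (w, x, y, z) with eigenvalues 0, 2(s₂+s₃), 2(s₁+s₃), 2(s₁+s₂), so that under the pullback along γ the rotation Laplace distribution with diagonal parameter S corresponds to a quaternion Laplace distribution, and the quadratic form is invariant under q ↦ −q. -/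
open Matrix Quaternion

/-- The standard transformation from quaternions to 3×3 matrices. -/
def gamma (q : Quaternion ℝ) : Matrix (Fin 3) (Fin 3) ℝ :=
  !![1 - 2*q.imJ^2 - 2*q.imK^2, 2*q.imI*q.imJ - 2*q.re*q.imK, 2*q.imI*q.imK + 2*q.re*q.imJ;
     2*q.imI*q.imJ + 2*q.re*q.imK, 1 - 2*q.imI^2 - 2*q.imK^2, 2*q.imJ*q.imK - 2*q.re*q.imI;
     2*q.imI*q.imK - 2*q.re*q.imJ, 2*q.imJ*q.imK + 2*q.re*q.imI, 1 - 2*q.imI^2 - 2*q.imJ^2]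

/-- Core identity for the equivalence of the rotation Laplace and quaternion Laplace
distributions: for `S = diag(s₁, s₂, s₃)` and a unit quaternion `q = w + xi + yj + zk`,
`tr S − tr(S γ(q)) = 2(s₂+s₃)x² + 2(s₁+s₃)y² + 2(s₁+s₂)z²`; in particular this quadratic
form is invariant under `q ↦ −q`. -/
theorem trace_sub_trace_gamma (s₁ s₂ s₃ : ℝ) (q : Quaternion ℝ)
    (hq : q.re ^ 2 + q.imI ^ 2 + q.imJ ^ 2 + q.imK ^ 2 = 1) :
    (Matrix.diagonal ![s₁, s₂, s₃]).trace
        - (Matrix.diagonal ![s₁, s₂, s₃] * gamma q).trace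
      = 2 * (s₂ + s₃) * q.imI ^ 2 + 2 * (s₁ + s₃) * q.imJ ^ 2
          + 2 * (s₁ + s₂) * q.imK ^ 2 ∧
    (Matrix.diagonal ![s₁, s₂, s₃]).trace
        - (Matrix.diagonal ![s₁, s₂, s₃] * gamma (-q)).trace
      = (Matrix.diagonal ![s₁, s₂, s₃]).trace
          - (Matrix.diagonal ![s₁, s₂, s₃] * gamma q).trace := by
  constructor
  · simp only [gamma, Matrix.trace, Matrix.diag, Matrix.mul_apply, Matrix.diagonal_apply,
      Fin.sum_univ_three, Matrix.cons_val', Matrix.cons_val_zero, Matrix.cons_val_one,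
      Matrix.head_cons, Matrix.empty_val', Matrix.cons_val_fin_one, Matrix.head_fin_const,
      Matrix.cons_val_two, Matrix.tail_cons]
    simp only [Matrix.of_apply, Matrix.cons_val_zero, Matrix.cons_val_one, Matrix.head_cons,
      Matrix.cons_val_two, Matrix.tail_cons]
    norm_num [Fin.ext_iff]
    nlinarith [hq]
  · simp only [gamma, Quaternion.re_neg, Quaternion.imI_neg, Quaternion.imJ_neg,
      Quaternion.imK_neg]
    ring_nf
end

section
/- (Mode of the quaternion Laplace distribution) Let M be a real 4×4 orthogonal matrix and Z = diag(0, z₁, z₂, z₃) with z₁, z₂, z₃ < 0. Then for every unit vector q ∈ ℝ⁴, qᵀ M Z Mᵀ q ≤ 0, with equality if and only if q equals the first column of M or its negative. Consequently the density of the quaternion Laplace distribution with parameters (M, Z), which is proportional to exp(−√(−qᵀMZMᵀq))/√(−qᵀMZMᵀq), attains its mode exactly at q₀ = ±(first column of M). -/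
open Matrix

/-- Mode of the quaternion Laplace distribution: for a real orthogonal 4×4 matrix `M`
and `Z = diag(0, z₁, z₂, z₃)` with `z₁, z₂, z₃ < 0`, every unit vector `q ∈ ℝ⁴` satisfies
`qᵀMZMᵀq ≤ 0`, with equality iff `q` is the first column of `M` or its negative. -/
theorem quaternion_laplace_mode
    (M : Matrix (Fin 4) (Fin 4) ℝ) (hM : Mᵀ * M = 1)
    (z₁ z₂ z₃ : ℝ) (h₁ : z₁ < 0) (h₂ : z₂ < 0) (h₃ : z₃ < 0)
    (q : Fin 4 → ℝ) (hq : ∑ i, q i ^ 2 = 1) :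
    q ⬝ᵥ (M * Matrix.diagonal ![0, z₁, z₂, z₃] * Mᵀ).mulVec q ≤ 0 ∧
    (q ⬝ᵥ (M * Matrix.diagonal ![0, z₁, z₂, z₃] * Mᵀ).mulVec q = 0 ↔
      q = (fun i => M i 0) ∨ q = -(fun i => M i 0)) := by
  have hMM : M * Mᵀ = 1 := mul_eq_one_comm.mpr hM
  set y : Fin 4 → ℝ := Mᵀ.mulVec q with hy
  -- the quadratic form value
  have hval : q ⬝ᵥ (M * Matrix.diagonal ![0, z₁, z₂, z₃] * Mᵀ).mulVec q
      = z₁ * y 1 ^ 2 + z₂ * y 2 ^ 2 + z₃ * y 3 ^ 2 := by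
    have h1 : q ⬝ᵥ (M * Matrix.diagonal ![0, z₁, z₂, z₃] * Mᵀ).mulVec q
        = y ⬝ᵥ (Matrix.diagonal ![0, z₁, z₂, z₃]).mulVec y := by
      rw [hy, ← Matrix.mulVec_mulVec, ← Matrix.mulVec_mulVec,
        Matrix.dotProduct_mulVec, ← Matrix.mulVec_transpose]
    rw [h1]
    simp [dotProduct, Matrix.mulVec_diagonal, Fin.sum_univ_four]
    ring
  -- norm preservation
  have hynorm : y 0 ^ 2 + y 1 ^ 2 + y 2 ^ 2 + y 3 ^ 2 = 1 := by
    have h1 : y ⬝ᵥ y = q ⬝ᵥ q := by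
      rw [hy, Matrix.dotProduct_mulVec, ← Matrix.mulVec_transpose,
        Matrix.transpose_transpose, Matrix.mulVec_mulVec, hMM, Matrix.one_mulVec]
    have h2 : q ⬝ᵥ q = 1 := by
      simpa [dotProduct, sq] using hq
    have h3 : y ⬝ᵥ y = y 0 ^ 2 + y 1 ^ 2 + y 2 ^ 2 + y 3 ^ 2 := by
      simp [dotProduct, Fin.sum_univ_four, sq]
    rw [← h3, h1, h2]
  -- q recovered from y
  have hqy : q = M.mulVec y := by
    rw [hy, Matrix.mulVec_mulVec, hMM, Matrix.one_mulVec]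
  have ht1 : z₁ * y 1 ^ 2 ≤ 0 := mul_nonpos_of_nonpos_of_nonneg h₁.le (sq_nonneg _)
  have ht2 : z₂ * y 2 ^ 2 ≤ 0 := mul_nonpos_of_nonpos_of_nonneg h₂.le (sq_nonneg _)
  have ht3 : z₃ * y 3 ^ 2 ≤ 0 := mul_nonpos_of_nonpos_of_nonneg h₃.le (sq_nonneg _)
  constructor
  · rw [hval]; linarith
  constructor
  · intro h0
    rw [hval] at h0
    have e1 : y 1 = 0 := by
      have : z₁ * y 1 ^ 2 = 0 := by linarith
      rcases mul_eq_zero.mp this with h | h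
      · exact absurd h h₁.ne
      · exact pow_eq_zero_iff (by norm_num) |>.mp h
    have e2 : y 2 = 0 := by
      have : z₂ * y 2 ^ 2 = 0 := by linarith
      rcases mul_eq_zero.mp this with h | h
      · exact absurd h h₂.ne
      · exact pow_eq_zero_iff (by norm_num) |>.mp h
    have e3 : y 3 = 0 := by
      have : z₃ * y 3 ^ 2 = 0 := by linarith
      rcases mul_eq_zero.mp this with h | h
      · exact absurd h h₃.ne
      · exact pow_eq_zero_iff (by norm_num) |>.mp h
    have e0 : y 0 ^ 2 = 1 := by rw [e1, e2, e3] at hynorm; linarith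
    have hqi : ∀ i, q i = M i 0 * y 0 := by
      intro i
      rw [hqy]
      simp [Matrix.mulVec, dotProduct, Fin.sum_univ_four, e1, e2, e3]
    have hprod : (y 0 - 1) * (y 0 + 1) = 0 := by ring_nf; linarith
    rcases mul_eq_zero.mp hprod with h | h
    · left
      funext i
      have : y 0 = 1 := by linarith
      simp [hqi i, this]
    · right
      funext i
      have : y 0 = -1 := by linarith
      simp [hqi i, this]
  · intro h
    have key : ∀ i, Mᵀ.mulVec (fun j => M j 0) i = (1 : Matrix (Fin 4) (Fin 4) ℝ) i 0 := by
      intro i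
      rw [← hM]
      simp [Matrix.mulVec, dotProduct, Matrix.mul_apply, Matrix.transpose_apply]
    rcases h with h | h
    · have hyi : ∀ i, y i = (1 : Matrix (Fin 4) (Fin 4) ℝ) i 0 := by
        intro i; rw [hy, h]; exact key i
      rw [hval, hyi 1, hyi 2, hyi 3]
      simp [Matrix.one_apply, show (1:Fin 4) ≠ 0 by decide, show (2:Fin 4) ≠ 0 by decide, show (3:Fin 4) ≠ 0 by decide]
    · have hyi : ∀ i, y i = -((1 : Matrix (Fin 4) (Fin 4) ℝ) i 0) := by
        intro i
        rw [hy, h]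
        have : Mᵀ.mulVec (-(fun i => M i 0)) = -(Mᵀ.mulVec (fun i => M i 0)) := by
          simp [Matrix.mulVec_neg]
        rw [this]
        simp [key i]
      rw [hval, hyi 1, hyi 2, hyi 3]
      simp [Matrix.one_apply, show (1:Fin 4) ≠ 0 by decide, show (2:Fin 4) ≠ 0 by decide, show (3:Fin 4) ≠ 0 by decide]
end

section
/- (Chordal mean) Let μ be a Borel probability measure on SO(3) and let M = ∫ R* dμ(R*) be its entrywise mean matrix. Suppose M has proper singular value decomposition M = U · diag(s₁, s₂, s₃) · Vᵀ with U, V ∈ SO(3), s₁ ≥ s₂ ≥ |s₃|, and s₂ + s₃ > 0. Then the function R ↦ ∫ ‖R − R*‖_F² dμ(R*) attains its minimum over SO(3) at the unique minimizer R̄ = U Vᵀ. -/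
open Matrix MeasureTheory

/-- The Borel (= product) measurable structure on the space of 3×3 real matrices. -/
instance : MeasurableSpace (Matrix (Fin 3) (Fin 3) ℝ) :=
  inferInstanceAs (MeasurableSpace ((Fin 3) → (Fin 3) → ℝ))

/-- The squared Frobenius norm of a 3×3 real matrix. -/
def frobSq (A : Matrix (Fin 3) (Fin 3) ℝ) : ℝ :=
  ∑ i, ∑ j, A i j ^ 2

lemma SO3.mul_transpose {W : Matrix (Fin 3) (Fin 3) ℝ} (h : SO3 W) : W * Wᵀ = 1 :=
  mul_eq_one_comm.mp h.1

lemma SO3.transpose {W : Matrix (Fin 3) (Fin 3) ℝ} (h : SO3 W) : SO3 Wᵀ :=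
  ⟨by rw [Matrix.transpose_transpose, h.mul_transpose], by rw [Matrix.det_transpose, h.2]⟩

lemma SO3.mul {A B : Matrix (Fin 3) (Fin 3) ℝ} (hA : SO3 A) (hB : SO3 B) : SO3 (A * B) := by
  constructor
  · rw [Matrix.transpose_mul]
    calc Bᵀ * Aᵀ * (A * B) = Bᵀ * (Aᵀ * A) * B := by noncomm_ring
      _ = 1 := by rw [hA.1, Matrix.mul_one, hB.1]
  · rw [Matrix.det_mul, hA.2, hB.2, one_mul]

lemma so3_col {W : Matrix (Fin 3) (Fin 3) ℝ} (hW : SO3 W) (j : Fin 3) :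
    W 0 j ^ 2 + W 1 j ^ 2 + W 2 j ^ 2 = 1 := by
  have h : (Wᵀ * W) j j = (1 : Matrix (Fin 3) (Fin 3) ℝ) j j := by rw [hW.1]
  simpa [Matrix.mul_apply, Fin.sum_univ_three, Matrix.one_apply, sq] using h

lemma so3_entry_le {W : Matrix (Fin 3) (Fin 3) ℝ} (hW : SO3 W) (i j : Fin 3) : |W i j| ≤ 1 := by
  have h : (∑ k, W k j ^ 2) = 1 := by
    rw [Fin.sum_univ_three]; exact so3_col hW j
  have h2 : W i j ^ 2 ≤ 1 := by
    rw [← h]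
    exact Finset.single_le_sum (f := fun k => W k j ^ 2) (fun k _ => sq_nonneg _)
      (Finset.mem_univ i)
  rw [abs_le]
  constructor <;> nlinarith [sq_nonneg (W i j + 1), sq_nonneg (W i j - 1)]
  
lemma so3_frobSq {W : Matrix (Fin 3) (Fin 3) ℝ} (hW : SO3 W) : frobSq W = 3 := by
  have h0 := so3_col hW 0; have h1 := so3_col hW 1; have h2 := so3_col hW 2
  simp only [frobSq, Fin.sum_univ_three]
  linarith

lemma so3_diag_one {W : Matrix (Fin 3) (Fin 3) ℝ} (hW : SO3 W)
    (h0 : W 0 0 = 1) (h1 : W 1 1 = 1) (h2 : W 2 2 = 1) : W = 1 := by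
  have c0 := so3_col hW 0; have c1 := so3_col hW 1; have c2 := so3_col hW 2
  rw [h0] at c0; rw [h1] at c1; rw [h2] at c2
  have e10 : W 1 0 = 0 := by nlinarith [sq_nonneg (W 1 0), sq_nonneg (W 2 0)]
  have e20 : W 2 0 = 0 := by nlinarith [sq_nonneg (W 1 0), sq_nonneg (W 2 0)]
  have e01 : W 0 1 = 0 := by nlinarith [sq_nonneg (W 0 1), sq_nonneg (W 2 1)]
  have e21 : W 2 1 = 0 := by nlinarith [sq_nonneg (W 0 1), sq_nonneg (W 2 1)]
  have e02 : W 0 2 = 0 := by nlinarith [sq_nonneg (W 0 2), sq_nonneg (W 1 2)]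
  have e12 : W 1 2 = 0 := by nlinarith [sq_nonneg (W 0 2), sq_nonneg (W 1 2)]
  ext i j
  fin_cases i <;> fin_cases j <;> simp_all [Matrix.one_apply]

lemma entry_integrable (μ : Measure (Matrix (Fin 3) (Fin 3) ℝ)) [IsProbabilityMeasure μ]
    (hsupp : ∀ᵐ R ∂μ, SO3 R) (i j : Fin 3) : Integrable (fun R => R i j) μ := by
  have hmeas : Measurable (fun R : Matrix (Fin 3) (Fin 3) ℝ => R i j) :=
    (measurable_pi_apply j).comp (measurable_pi_apply i)
  refine Integrable.mono' (integrable_const 1) hmeas.aestronglyMeasurable ?_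
  filter_upwards [hsupp] with R hR
  simpa using so3_entry_le hR i j

lemma integral_frobSq (μ : Measure (Matrix (Fin 3) (Fin 3) ℝ)) [IsProbabilityMeasure μ]
    (hsupp : ∀ᵐ R ∂μ, SO3 R) (A : Matrix (Fin 3) (Fin 3) ℝ) :
    ∫ Rstar, frobSq (A - Rstar) ∂μ
      = frobSq A + 3 - 2 * ∑ i, ∑ j, A i j * ∫ Rstar, Rstar i j ∂μ := by
  have hint : ∀ i j : Fin 3, Integrable (fun R => R i j) μ := entry_integrable μ hsupp
  have hS : Integrable (fun R : Matrix (Fin 3) (Fin 3) ℝ => ∑ i, ∑ j, A i j * R i j) μ := by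
    refine integrable_finset_sum _ fun i _ => integrable_finset_sum _ fun j _ => ?_
    exact (hint i j).const_mul _
  have hae : (fun Rstar => frobSq (A - Rstar)) =ᵐ[μ]
      (fun Rstar => frobSq A + 3 - 2 * ∑ i, ∑ j, A i j * Rstar i j) := by
    filter_upwards [hsupp] with R hR
    have h3 : frobSq R = 3 := so3_frobSq hR
    simp only [frobSq, Fin.sum_univ_three, Matrix.sub_apply] at *
    ring_nf
    ring_nf at h3
    linarith
  rw [integral_congr_ae hae, integral_sub (integrable_const _) (hS.const_mul 2),
    integral_const, integral_const_mul]
  have : ∫ R, (∑ i, ∑ j, A i j * R i j) ∂μ = ∑ i, ∑ j, A i j * ∫ R, R i j ∂μ := by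
    rw [integral_finset_sum (f := fun i (R : Matrix (Fin 3) (Fin 3) ℝ) => ∑ j, A i j * R i j) _ fun i _ => integrable_finset_sum _ fun j _ => (hint i j).const_mul _]
    refine Finset.sum_congr rfl fun i _ => ?_
    rw [integral_finset_sum (f := fun j (R : Matrix (Fin 3) (Fin 3) ℝ) => A i j * R i j) _ fun j _ => (hint i j).const_mul _]
    exact Finset.sum_congr rfl fun j _ => integral_const_mul _ _
  rw [this]
  simp

lemma quad_sign {A₁ A₂ A₃ D p q r s t u : ℝ}
    (I1 : D * A₁ = p^2) (I2 : D * A₂ = q^2) (I3 : D * A₃ = r^2)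
    (I4 : A₁ * A₂ = s^2) (I5 : A₁ * A₃ = t^2) (I6 : A₂ * A₃ = u^2)
    (hsum : A₁ + A₂ + A₃ + D = 4) : 0 ≤ A₁ ∧ 0 ≤ A₂ ∧ 0 ≤ A₃ := by
  refine ⟨?_, ?_, ?_⟩
  · by_contra hc; push_neg at hc
    have h2 : A₂ ≤ 0 := by nlinarith [sq_nonneg s]
    have h3 : A₃ ≤ 0 := by nlinarith [sq_nonneg t]
    have h4 : D ≤ 0 := by nlinarith [sq_nonneg p]
    linarith
  · by_contra hc; push_neg at hc
    have h1 : A₁ ≤ 0 := by nlinarith [sq_nonneg s]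
    have h3 : A₃ ≤ 0 := by nlinarith [sq_nonneg u]
    have h4 : D ≤ 0 := by nlinarith [sq_nonneg q]
    linarith
  · by_contra hc; push_neg at hc
    have h1 : A₁ ≤ 0 := by nlinarith [sq_nonneg t]
    have h2 : A₂ ≤ 0 := by nlinarith [sq_nonneg u]
    have h4 : D ≤ 0 := by nlinarith [sq_nonneg r]
    linarith

lemma SO3.adj_eq {W : Matrix (Fin 3) (Fin 3) ℝ} (h : SO3 W) : W.adjugate = Wᵀ := by
  have h1 : W * W.adjugate = 1 := by rw [Matrix.mul_adjugate, h.2, one_smul]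
  calc W.adjugate = (Wᵀ * W) * W.adjugate := by rw [h.1, one_mul]
    _ = Wᵀ * (W * W.adjugate) := by rw [Matrix.mul_assoc]
    _ = Wᵀ := by rw [h1, mul_one]

set_option maxHeartbeats 1000000 in
/-- The three key inequalities for a rotation matrix. -/
lemma so3_key {W : Matrix (Fin 3) (Fin 3) ℝ} (hW : SO3 W) :
    0 ≤ 1 + W 0 0 - W 1 1 - W 2 2 ∧ 0 ≤ 1 - W 0 0 + W 1 1 - W 2 2 ∧
      0 ≤ 1 - W 0 0 - W 1 1 + W 2 2 := by
  have hcol : ∀ p q, (Wᵀ * W) p q = (1 : Matrix (Fin 3) (Fin 3) ℝ) p q := fun p q => by rw [hW.1]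
  have C1 : W 0 0 * W 0 0 + W 1 0 * W 1 0 + W 2 0 * W 2 0 = 1 := by
    simpa [Matrix.mul_apply, Fin.sum_univ_three, Matrix.one_apply] using hcol 0 0
  have C2 : W 0 1 * W 0 1 + W 1 1 * W 1 1 + W 2 1 * W 2 1 = 1 := by
    simpa [Matrix.mul_apply, Fin.sum_univ_three, Matrix.one_apply] using hcol 1 1
  have C3 : W 0 2 * W 0 2 + W 1 2 * W 1 2 + W 2 2 * W 2 2 = 1 := by
    simpa [Matrix.mul_apply, Fin.sum_univ_three, Matrix.one_apply] using hcol 2 2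
  have hrow : ∀ p q, (W * Wᵀ) p q = (1 : Matrix (Fin 3) (Fin 3) ℝ) p q :=
    fun p q => by rw [hW.mul_transpose]
  have R1 : W 0 0 * W 0 0 + W 0 1 * W 0 1 + W 0 2 * W 0 2 = 1 := by
    simpa [Matrix.mul_apply, Fin.sum_univ_three, Matrix.one_apply] using hrow 0 0
  have R2 : W 1 0 * W 1 0 + W 1 1 * W 1 1 + W 1 2 * W 1 2 = 1 := by
    simpa [Matrix.mul_apply, Fin.sum_univ_three, Matrix.one_apply] using hrow 1 1
  have R3 : W 2 0 * W 2 0 + W 2 1 * W 2 1 + W 2 2 * W 2 2 = 1 := by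
    simpa [Matrix.mul_apply, Fin.sum_univ_three, Matrix.one_apply] using hrow 2 2
  have hadj : ∀ p q, W.adjugate p q = Wᵀ p q := fun p q => by rw [hW.adj_eq]
  have Ea : W 1 1 * W 2 2 - W 1 2 * W 2 1 = W 0 0 := by
    simpa [Matrix.adjugate_fin_three] using hadj 0 0
  have Ee : W 0 0 * W 2 2 - W 0 2 * W 2 0 = W 1 1 := by
    simpa [Matrix.adjugate_fin_three] using hadj 1 1
  have Ei : W 0 0 * W 1 1 - W 0 1 * W 1 0 = W 2 2 := by
    simpa [Matrix.adjugate_fin_three] using hadj 2 2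
  set a := W 0 0; set b := W 0 1; set c := W 0 2
  set d := W 1 0; set e := W 1 1; set f := W 1 2
  set g := W 2 0; set h := W 2 1; set i := W 2 2
  clear hcol hrow hadj hW
  have I1 : (1+a+e+i) * (1+a-e-i) = (h - f)^2 := by linear_combination (-2)*Ea + C1 - R2 - R3
  have I2 : (1+a+e+i) * (1-a+e-i) = (c - g)^2 := by linear_combination (-2)*Ee + C2 - R1 - R3
  have I3 : (1+a+e+i) * (1-a-e+i) = (d - b)^2 := by linear_combination (-2)*Ei + C3 - R1 - R2
  have I4 : (1+a-e-i) * (1-a+e-i) = (b + d)^2 := by linear_combination 2*Ei + C3 - R1 - R2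
  have I5 : (1+a-e-i) * (1-a-e+i) = (c + g)^2 := by linear_combination 2*Ee + C2 - R1 - R3
  have I6 : (1-a+e-i) * (1-a-e+i) = (f + h)^2 := by linear_combination 2*Ea + C1 - R2 - R3
  exact quad_sign I1 I2 I3 I4 I5 I6 (by ring)

/-- The chordal mean: if `μ` is a Borel probability measure supported on `SO(3)` whose
entrywise mean matrix `M` has proper SVD `M = U · diag(s₁,s₂,s₃) · Vᵀ` with
`s₁ ≥ s₂ ≥ |s₃|` and `s₂ + s₃ > 0`, then `R ↦ ∫ ‖R − R*‖_F² dμ(R*)` attains its minimum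
over `SO(3)` at the unique minimizer `R̄ = UVᵀ`. -/
theorem chordal_mean_eq_UVT
    (μ : Measure (Matrix (Fin 3) (Fin 3) ℝ)) [IsProbabilityMeasure μ]
    (hsupp : ∀ᵐ R ∂μ, SO3 R)
    (M : Matrix (Fin 3) (Fin 3) ℝ) (hM : ∀ i j, M i j = ∫ R, R i j ∂μ)
    (U V : Matrix (Fin 3) (Fin 3) ℝ) (s₁ s₂ s₃ : ℝ)
    (hU : SO3 U) (hV : SO3 V) (h12 : s₁ ≥ s₂) (h23 : s₂ ≥ |s₃|) (hpos : s₂ + s₃ > 0)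
    (hsvd : M = U * Matrix.diagonal ![s₁, s₂, s₃] * Vᵀ) :
    ∀ R : Matrix (Fin 3) (Fin 3) ℝ, SO3 R →
      (∫ Rstar, frobSq (U * Vᵀ - Rstar) ∂μ) ≤ (∫ Rstar, frobSq (R - Rstar) ∂μ) ∧
      ((∫ Rstar, frobSq (R - Rstar) ∂μ) = (∫ Rstar, frobSq (U * Vᵀ - Rstar) ∂μ) →
        R = U * Vᵀ) := by
  intro R hR
  -- coefficient positivity
  have hc1 : 0 < s₂ + s₃ := hpos
  have hc2 : 0 < s₁ + s₃ := by linarith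
  have hc3 : 0 < s₁ + s₂ := by
    have := le_abs_self s₃; linarith
  -- the integral formula in terms of M
  have key : ∀ A : Matrix (Fin 3) (Fin 3) ℝ, ∫ Rstar, frobSq (A - Rstar) ∂μ
      = frobSq A + 3 - 2 * ∑ i, ∑ j, A i j * M i j := by
    intro A
    rw [integral_frobSq μ hsupp A]
    simp_rw [hM]
  -- the sum as a trace
  have htr : ∀ A : Matrix (Fin 3) (Fin 3) ℝ, (∑ i, ∑ j, A i j * M i j)
      = Matrix.trace (Vᵀ * Aᵀ * U * Matrix.diagonal ![s₁, s₂, s₃]) := by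
    intro A
    have h1 : (∑ i, ∑ j, A i j * M i j) = Matrix.trace (Aᵀ * M) := by
      simp only [Matrix.trace, Matrix.diag, Matrix.mul_apply, Matrix.transpose_apply,
        Fin.sum_univ_three]
      ring
    rw [h1, hsvd]
    rw [show Aᵀ * (U * Matrix.diagonal ![s₁, s₂, s₃] * Vᵀ)
        = (Aᵀ * U * Matrix.diagonal ![s₁, s₂, s₃]) * Vᵀ by noncomm_ring]
    rw [Matrix.trace_mul_comm]
    noncomm_ring
  -- trace over diagonal
  have htrW : ∀ B : Matrix (Fin 3) (Fin 3) ℝ,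
      Matrix.trace (B * Matrix.diagonal ![s₁, s₂, s₃])
        = s₁ * B 0 0 + s₂ * B 1 1 + s₃ * B 2 2 := by
    intro B
    simp [Matrix.trace, Matrix.diag, Matrix.mul_apply, Matrix.diagonal, Fin.sum_univ_three]
    ring
  set W : Matrix (Fin 3) (Fin 3) ℝ := Vᵀ * Rᵀ * U with hWdef
  have hWso : SO3 W := (hV.transpose.mul hR.transpose).mul hU
  have hW1 : Vᵀ * (U * Vᵀ)ᵀ * U = 1 := by
    rw [Matrix.transpose_mul, Matrix.transpose_transpose]
    calc Vᵀ * (V * Uᵀ) * U = (Vᵀ * V) * (Uᵀ * U) := by noncomm_ring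
      _ = 1 := by rw [hV.1, hU.1, one_mul]
  have hSUV : (∑ i, ∑ j, (U * Vᵀ) i j * M i j) = s₁ + s₂ + s₃ := by
    rw [htr, hW1, one_mul]
    simp [Matrix.trace, Matrix.diag, Matrix.diagonal, Fin.sum_univ_three]
  have hSR : (∑ i, ∑ j, R i j * M i j) = s₁ * W 0 0 + s₂ * W 1 1 + s₃ * W 2 2 := by
    rw [htr, ← hWdef, htrW]
  obtain ⟨hA1, hA2, hA3⟩ := so3_key hWso
  have p1 : 0 ≤ (s₂ + s₃) * (1 + W 0 0 - W 1 1 - W 2 2) := mul_nonneg hc1.le hA1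
  have p2 : 0 ≤ (s₁ + s₃) * (1 - W 0 0 + W 1 1 - W 2 2) := mul_nonneg hc2.le hA2
  have p3 : 0 ≤ (s₁ + s₂) * (1 - W 0 0 - W 1 1 + W 2 2) := mul_nonneg hc3.le hA3
  have hfR : frobSq R = 3 := so3_frobSq hR
  have hfUV : frobSq (U * Vᵀ) = 3 := so3_frobSq (hU.mul hV.transpose)
  rw [key, key, hSUV, hSR, hfR, hfUV]
  constructor
  · nlinarith [p1, p2, p3]
  · intro heq
    have e1 : (s₂ + s₃) * (1 + W 0 0 - W 1 1 - W 2 2) = 0 := by nlinarith [p2, p3]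
    have e2 : (s₁ + s₃) * (1 - W 0 0 + W 1 1 - W 2 2) = 0 := by nlinarith [p1, p3]
    have e3 : (s₁ + s₂) * (1 - W 0 0 - W 1 1 + W 2 2) = 0 := by nlinarith [p1, p2]
    have z1 : 1 + W 0 0 - W 1 1 - W 2 2 = 0 := by
      rcases mul_eq_zero.mp e1 with h | h
      · exact absurd h (ne_of_gt hc1)
      · exact h
    have z2 : 1 - W 0 0 + W 1 1 - W 2 2 = 0 := by
      rcases mul_eq_zero.mp e2 with h | h
      · exact absurd h (ne_of_gt hc2)
      · exact h
    have z3 : 1 - W 0 0 - W 1 1 + W 2 2 = 0 := by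
      rcases mul_eq_zero.mp e3 with h | h
      · exact absurd h (ne_of_gt hc3)
      · exact h
    have hWone : W = 1 := so3_diag_one hWso (by linarith) (by linarith) (by linarith)
    have hRT : Rᵀ = V * Uᵀ := by
      have h5 : V * (Vᵀ * Rᵀ * U) * Uᵀ = V * 1 * Uᵀ := by rw [← hWdef, hWone]
      calc Rᵀ = (V * Vᵀ) * Rᵀ * (U * Uᵀ) := by rw [hV.mul_transpose, hU.mul_transpose]; noncomm_ring
        _ = V * (Vᵀ * Rᵀ * U) * Uᵀ := by noncomm_ring
        _ = V * Uᵀ := by rw [h5]; noncomm_ring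
    calc R = Rᵀᵀ := by rw [Matrix.transpose_transpose]
      _ = (V * Uᵀ)ᵀ := by rw [hRT]
      _ = U * Vᵀ := by rw [Matrix.transpose_mul, Matrix.transpose_transpose]
end
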